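/- For every n ≥ 2, there is an n-state DFA M over {0,1} such that the minimal DFA for suff(L(M)) has exactly 2^n − 1 states. Specifically, take states {0,...,n-1}, start state 0, final state set {0}, with δ(q,0) = q for 0 ≤ q < n-1, δ(n-1,0) = 0, and δ(q,1) = (q+1) mod n. -/

import Mathlib

/-- The DFA of Theorem `suff`: states `{0,…,n-1}`, start state `0`, final state set
`{0}`, with `δ(q,0) = q` for `0 ≤ q < n-1`, `δ(n-1,0) = 0`, and
`δ(q,1) = (q+1) mod n`. -/
def suffWitnessDFA (n : ℕ) [NeZero n] : DFA (Fin 2) (Fin n) where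
  step q a := if a = 0 then (if q.val = n - 1 then 0 else q) else q + 1
  start := 0
  accept := {0}

open Fin.NatCast Fin.CommRing

namespace SuffAux

variable {n : ℕ} [NeZero n]

/-- A function on states is achievable if some word acts as that function. -/
def Achievable (h : Fin n → Fin n) : Prop :=
  ∃ w : List (Fin 2), ∀ q, (suffWitnessDFA n).evalFrom q w = h q

lemma achievable_congr {h h' : Fin n → Fin n} (e : ∀ q, h q = h' q)
    (a : Achievable h) : Achievable h' := by
  obtain ⟨w, hw⟩ := a
  exact ⟨w, fun q => (hw q).trans (e q)⟩

lemma achievable_id : Achievable (id : Fin n → Fin n) := ⟨[], fun q => rfl⟩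

lemma achievable_comp {h₁ h₂ : Fin n → Fin n} (a₁ : Achievable h₁) (a₂ : Achievable h₂) :
    Achievable (h₂ ∘ h₁) := by
  obtain ⟨w₁, hw₁⟩ := a₁
  obtain ⟨w₂, hw₂⟩ := a₂
  refine ⟨w₁ ++ w₂, fun q => ?_⟩
  rw [DFA.evalFrom_of_append, hw₁, hw₂]
  rfl

lemma step_one (q : Fin n) : (suffWitnessDFA n).step q 1 = q + 1 := by
  simp [suffWitnessDFA]

lemma step_zero (q : Fin n) :
    (suffWitnessDFA n).step q 0 = if q.val = n - 1 then 0 else q := by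
  simp [suffWitnessDFA]

lemma achievable_rot (k : ℕ) : Achievable (fun q : Fin n => q + (k : Fin n)) := by
  induction k with
  | zero => exact achievable_congr (fun q => by simp) achievable_id
  | succ k ih =>
    obtain ⟨w, hw⟩ := ih
    refine ⟨w ++ [1], fun q => ?_⟩
    rw [DFA.evalFrom_of_append, hw, DFA.evalFrom_singleton, step_one]
    push_cast
    ring

lemma achievable_step0 :
    Achievable (fun q : Fin n => if q.val = n - 1 then 0 else q) :=
  ⟨[0], fun q => by rw [DFA.evalFrom_singleton, step_zero]⟩

/-- The map that sends `t` to `t+1` and fixes everything else. -/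
def move (t : Fin n) : Fin n → Fin n := fun q => if q = t then t + 1 else q

lemma achievable_move (t : Fin n) : Achievable (move t) := by
  have hn0 : 0 < n := Nat.pos_of_ne_zero (NeZero.ne n)
  set r : ℕ := n - 1 - t.val with hr_def
  have htn : t.val < n := t.isLt
  have hr : r < n := by omega
  have comp := achievable_comp (achievable_comp (achievable_rot (n := n) r)
    achievable_step0) (achievable_rot (n := n) (n - r))
  refine achievable_congr (fun q => ?_) comp
  simp only [Function.comp_apply]
  have hval : ((r : Fin n)).val = r := Fin.val_cast_of_lt hr
  have hadd : (q + (r : Fin n)).val = (q.val + r) % n := by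
    rw [Fin.val_add, hval]
  by_cases hq : q = t
  · subst hq
    have h1 : (q + (r : Fin n)).val = n - 1 := by
      rw [hadd]
      rw [Nat.mod_eq_of_lt (by omega)]
      omega
    rw [if_pos h1, move, if_pos rfl, zero_add]
    have h2 : n - r = q.val + 1 := by omega
    rw [h2]
    push_cast
    rfl
  · have h1 : (q + (r : Fin n)).val ≠ n - 1 := by
      rw [hadd]
      intro h
      apply hq
      apply Fin.ext
      rcases Nat.lt_or_ge (q.val + r) n with hlt | hge
      · rw [Nat.mod_eq_of_lt hlt] at h
        omega
      · rw [Nat.mod_eq_sub_mod hge, Nat.mod_eq_of_lt (by omega)] at h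
        omega
    rw [if_neg h1, move, if_neg hq, add_assoc]
    have h2 : (r : Fin n) + ((n - r : ℕ) : Fin n) = 0 := by
      rw [← Nat.cast_add]
      have : r + (n - r) = n := by omega
      rw [this, Fin.natCast_self]
    rw [h2, add_zero]

/-- A set of states is reachable if it is the image of the full state set under
some achievable function. -/
def ReachSet (S : Finset (Fin n)) : Prop :=
  ∃ h, Achievable h ∧ Finset.univ.image h = S

lemma reach_univ : ReachSet (Finset.univ : Finset (Fin n)) :=
  ⟨id, achievable_id, by simp⟩

lemma reach_image {S : Finset (Fin n)} {h : Fin n → Fin n}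
    (hS : ReachSet S) (hh : Achievable h) : ReachSet (S.image h) := by
  obtain ⟨h₀, a₀, himg⟩ := hS
  exact ⟨h ∘ h₀, achievable_comp a₀ hh, by rw [← himg, Finset.image_image]⟩

lemma exists_boundary {A : Finset (Fin n)} (hne : A.Nonempty)
    (hNu : A ≠ Finset.univ) : ∃ t, t ∉ A ∧ t + 1 ∈ A := by
  by_contra hc
  push_neg at hc
  obtain ⟨a, ha⟩ := hne
  apply hNu
  apply Finset.eq_univ_iff_forall.mpr
  have key : ∀ k : ℕ, a - (k : Fin n) ∈ A := by
    intro k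
    induction k with
    | zero => simpa using ha
    | succ k ih =>
      by_contra h
      have h2 := hc _ h
      apply h2
      have : a - ((k + 1 : ℕ) : Fin n) + 1 = a - (k : Fin n) := by
        push_cast
        ring
      rw [this]
      exact ih
  intro q
  have := key (a - q).val
  rwa [Fin.cast_val_eq_self, sub_sub_cancel] at this

lemma image_move_insert {A : Finset (Fin n)} {t : Fin n} (ht : t ∉ A) (ht1 : t + 1 ∈ A) :
    (insert t A).image (move t) = A := by
  rw [Finset.image_insert]
  have h1 : move t t = t + 1 := if_pos rfl
  have h2 : A.image (move t) = A := by
    have : A.image (move t) = A.image id := by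
      apply Finset.image_congr
      intro x hx
      have : x ≠ t := fun h => ht (h ▸ hx)
      simp [move, this]
    rw [this, Finset.image_id]
  rw [h1, h2, Finset.insert_eq_self.mpr ht1]

lemma reach_card : ∀ m : ℕ, ∀ A : Finset (Fin n), A.Nonempty → A.card = n - m →
    ReachSet A := by
  intro m
  induction m with
  | zero =>
    intro A _ hcard
    have : A = Finset.univ := by
      apply Finset.eq_univ_of_card
      simpa using hcard
    exact this ▸ reach_univ
  | succ m ih =>
    intro A hne hcard
    by_cases hu : A = Finset.univ
    · exact hu ▸ reach_univ
    · obtain ⟨t, ht, ht1⟩ := exists_boundary hne hu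
      have hpos : 1 ≤ A.card := hne.card_pos
      have hcard' : (insert t A).card = n - m := by
        rw [Finset.card_insert_of_notMem ht, hcard]
        omega
      have hR := ih (insert t A) ⟨t, Finset.mem_insert_self _ _⟩ hcard'
      have hI := reach_image hR (achievable_move t)
      rwa [image_move_insert ht ht1] at hI

lemma reach_all (A : Finset (Fin n)) (hne : A.Nonempty) : ReachSet A := by
  refine reach_card (n - A.card) A hne ?_
  have h1 : A.card ≤ n := by
    have := A.card_le_univ
    simpa using this
  omega

/-- Characterization of the suffix language. -/
lemma suff_eq :
    {v : List (Fin 2) | ∃ u, u ++ v ∈ (suffWitnessDFA n).accepts} =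
      {v : List (Fin 2) | ∃ q : Fin n, (suffWitnessDFA n).evalFrom q v = 0} := by
  ext v
  simp only [Set.mem_setOf_eq]
  constructor
  · rintro ⟨u, hu⟩
    rw [DFA.mem_accepts] at hu
    refine ⟨(suffWitnessDFA n).evalFrom 0 u, ?_⟩
    have : (suffWitnessDFA n).eval (u ++ v) =
        (suffWitnessDFA n).evalFrom ((suffWitnessDFA n).evalFrom 0 u) v := by
      rw [DFA.eval, show (suffWitnessDFA n).start = 0 from rfl,
        DFA.evalFrom_of_append]
    rw [this] at hu
    exact hu
  · rintro ⟨q, hq⟩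
    obtain ⟨w, hw⟩ := achievable_rot (n := n) q.val
    refine ⟨w, ?_⟩
    rw [DFA.mem_accepts]
    have hstep : (suffWitnessDFA n).eval (w ++ v) =
        (suffWitnessDFA n).evalFrom ((suffWitnessDFA n).evalFrom 0 w) v := by
      rw [DFA.eval, show (suffWitnessDFA n).start = 0 from rfl,
        DFA.evalFrom_of_append]
    have h0 : (suffWitnessDFA n).evalFrom 0 w = q := by
      rw [hw 0]
      show (0 : Fin n) + ((q.val : ℕ) : Fin n) = q
      rw [zero_add, Fin.cast_val_eq_self]
    rw [hstep, h0, hq]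
    rfl

/-- The subset automaton on nonempty subsets. -/
def bigD : DFA (Fin 2) {A : Finset (Fin n) // A.Nonempty} where
  step A a := ⟨A.1.image (fun q => (suffWitnessDFA n).step q a), A.2.image _⟩
  start := ⟨Finset.univ, Finset.univ_nonempty⟩
  accept := {A | 0 ∈ A.1}

lemma bigD_eval (v : List (Fin 2)) (A : {A : Finset (Fin n) // A.Nonempty}) :
    ((bigD (n := n)).evalFrom A v).1 =
      A.1.image (fun q => (suffWitnessDFA n).evalFrom q v) := by
  induction v generalizing A with
  | nil => simp
  | cons a v ih =>
    have h1 : (bigD (n := n)).evalFrom A (a :: v) =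
        (bigD (n := n)).evalFrom ((bigD (n := n)).step A a) v := rfl
    rw [h1, ih]
    show ((bigD (n := n)).step A a).1.image _ = _
    rw [show ((bigD (n := n)).step A a).1 =
      A.1.image (fun q => (suffWitnessDFA n).step q a) from rfl,
      Finset.image_image]
    rfl

lemma bigD_accepts :
    (bigD (n := n)).accepts =
      {v : List (Fin 2) | ∃ q : Fin n, (suffWitnessDFA n).evalFrom q v = 0} := by
  ext v
  rw [DFA.mem_accepts]
  show (0 : Fin n) ∈ ((bigD (n := n)).evalFrom (bigD (n := n)).start v).1 ↔ _
  rw [bigD_eval]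
  simp only [Set.mem_setOf_eq, Finset.mem_image]
  constructor
  · rintro ⟨a, -, ha⟩
    exact ⟨a, ha⟩
  · rintro ⟨q, hq⟩
    exact ⟨q, Finset.mem_univ q, hq⟩

lemma card_nonempty_finsets :
    Fintype.card {A : Finset (Fin n) // A.Nonempty} = 2 ^ n - 1 := by
  have e : {A : Finset (Fin n) // A.Nonempty} ≃ {A : Finset (Fin n) // ¬ A = ∅} :=
    Equiv.subtypeEquivRight (fun A => by
      simp [Finset.nonempty_iff_ne_empty])
  rw [Fintype.card_congr e, Fintype.card_subtype_compl,
    Fintype.card_subtype_eq (∅ : Finset (Fin n)), Fintype.card_finset,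
    Fintype.card_fin]

end SuffAux

theorem suff_state_complexity_tight (n : ℕ) [NeZero n] (hn : 2 ≤ n) :
    (∃ (τ : Type) (_ : Fintype τ) (D' : DFA (Fin 2) τ),
        D'.accepts = {v : List (Fin 2) | ∃ u, u ++ v ∈ (suffWitnessDFA n).accepts} ∧
        Fintype.card τ = 2 ^ n - 1) ∧
    (∀ (τ : Type) (_ : Fintype τ) (D' : DFA (Fin 2) τ),
        D'.accepts = {v : List (Fin 2) | ∃ u, u ++ v ∈ (suffWitnessDFA n).accepts} →
        2 ^ n - 1 ≤ Fintype.card τ) := by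
  classical
  constructor
  · refine ⟨{A : Finset (Fin n) // A.Nonempty}, inferInstance, SuffAux.bigD, ?_, ?_⟩
    · rw [SuffAux.bigD_accepts, SuffAux.suff_eq]
    · exact SuffAux.card_nonempty_finsets
  · intro τ _ D' hD'
    rw [SuffAux.suff_eq] at hD'
    -- for each nonempty set, a word reaching it
    have hword : ∀ A : {A : Finset (Fin n) // A.Nonempty},
        ∃ w : List (Fin 2), ∀ q : Fin n,
          (∃ p, (suffWitnessDFA n).evalFrom p w = q) ↔ q ∈ A.1 := by
      intro A
      obtain ⟨h, ⟨w, hw⟩, himg⟩ := SuffAux.reach_all A.1 A.2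
      refine ⟨w, fun q => ?_⟩
      rw [← himg]
      simp only [Finset.mem_image, Finset.mem_univ, true_and]
      constructor
      · rintro ⟨p, hp⟩; exact ⟨p, by rw [← hw p, hp]⟩
      · rintro ⟨p, hp⟩; exact ⟨p, by rw [hw p, hp]⟩
    choose wordOf hwordOf using hword
    set F : {A : Finset (Fin n) // A.Nonempty} → τ :=
      fun A => D'.evalFrom D'.start (wordOf A) with hF
    have key : ∀ A B : {A : Finset (Fin n) // A.Nonempty}, ∀ x : Fin n,
        x ∈ A.1 → x ∉ B.1 → F A = F B → False := by
      intro A B x hxA hxB hFAB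
      obtain ⟨w, hw⟩ := SuffAux.achievable_rot (n := n) (n - x.val)
      have hx0 : x + ((n - x.val : ℕ) : Fin n) = 0 := by
        have hsum : (x.val + (n - x.val) : ℕ) = n := by omega
        calc x + ((n - x.val : ℕ) : Fin n)
            = ((x.val : ℕ) : Fin n) + ((n - x.val : ℕ) : Fin n) := by
              rw [Fin.cast_val_eq_self]
          _ = ((x.val + (n - x.val) : ℕ) : Fin n) := by rw [Nat.cast_add]
          _ = ((n : ℕ) : Fin n) := by rw [hsum]
          _ = 0 := Fin.natCast_self n
      -- w_A ++ w accepted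
      have hAacc : wordOf A ++ w ∈ D'.accepts := by
        rw [hD']
        obtain ⟨p, hp⟩ := (hwordOf A x).mpr hxA
        refine ⟨p, ?_⟩
        rw [DFA.evalFrom_of_append, hp, hw x]
        exact hx0
      have hBacc : wordOf B ++ w ∉ D'.accepts := by
        rw [hD']
        rintro ⟨p, hp⟩
        rw [DFA.evalFrom_of_append, hw] at hp
        set q := (suffWitnessDFA n).evalFrom p (wordOf B) with hq
        have hqB : q ∈ B.1 := (hwordOf B q).mp ⟨p, rfl⟩
        have hqx : q = x := by
          have h2 : q + ((n - x.val : ℕ) : Fin n) = x + ((n - x.val : ℕ) : Fin n) := by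
            rw [hx0]
            exact hp
          exact add_right_cancel h2
        exact hxB (hqx ▸ hqB)
      apply hBacc
      rw [DFA.mem_accepts] at hAacc ⊢
      have e1 : D'.eval (wordOf A ++ w) = D'.evalFrom (F A) w := by
        rw [DFA.eval, DFA.evalFrom_of_append]
      have e2 : D'.eval (wordOf B ++ w) = D'.evalFrom (F B) w := by
        rw [DFA.eval, DFA.evalFrom_of_append]
      rw [e2, ← hFAB, ← e1]
      exact hAacc
    have hinj : Function.Injective F := by
      intro A B hAB
      by_contra hne
      have hne' : A.1 ≠ B.1 := fun h => hne (Subtype.ext h)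
      rcases Finset.not_subset.mp (fun h => hne' (Finset.Subset.antisymm h
        (by
          by_contra hBA
          obtain ⟨x, hxB, hxA⟩ := Finset.not_subset.mp hBA
          exact key B A x hxB hxA hAB.symm))) with ⟨x, hxA, hxB⟩
      exact key A B x hxA hxB hAB
    calc 2 ^ n - 1 = Fintype.card {A : Finset (Fin n) // A.Nonempty} :=
          SuffAux.card_nonempty_finsets.symm
      _ ≤ Fintype.card τ := Fintype.card_le_of_injective F hinj
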